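/- Let X be a Tychonoff space and let P be either pseudocompactness, or a closed hereditary topological property that is preserved under finite closed sums of subspaces. For a one-point Tychonoff extension Y of X, the following are equivalent: (1) Y is a P-far extension of X; (2) Θ_X(Y) ⊆ βX\λ_P X. -/

import Mathlib

open Set Topology Filter

universe u

/-- A one-point Tychonoff extension of `X`: a Tychonoff space containing (a homeomorphic copy
of) `X` as a dense subspace whose complement is a single point `pt`. -/
structure OnePointExt (X : Type u) [TopologicalSpace X] : Type (u + 1) where
  carrier : Type u
  top : TopologicalSpace carrier
  t35 : @T35Space carrier top
  ι : X → carrier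
  emb : @Topology.IsEmbedding X carrier _ top ι
  pt : carrier
  range_eq : Set.range ι = {pt}ᶜ
  dense : @DenseRange carrier top X ι

attribute [instance] OnePointExt.top OnePointExt.t35

variable {X : Type u} [TopologicalSpace X]

/-- The partial order on one-point extensions: `Y₁ ≤ Y₂` iff there is a continuous map from
`Y₂` into `Y₁` fixing `X` pointwise. -/
def OnePointExt.le (Y1 Y2 : OnePointExt X) : Prop :=
  ∃ f : Y2.carrier → Y1.carrier, Continuous f ∧ ∀ x, f (Y2.ι x) = Y1.ι x

/-- Equivalence of extensions: a homeomorphism fixing `X` pointwise. -/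
def OnePointExt.equiv (Y1 Y2 : OnePointExt X) : Prop :=
  ∃ h : Y1.carrier ≃ₜ Y2.carrier, ∀ x, h (Y1.ι x) = Y2.ι x

/-- `τ_Y : βX → βY`, the unique continuous extension of `id_X`. -/
noncomputable def OnePointExt.tau (Y : OnePointExt X) : StoneCech X → StoneCech Y.carrier :=
  stoneCechExtend (continuous_stoneCechUnit.comp Y.emb.continuous)

/-- `Θ_X(Y) = τ_Y⁻¹(Y \ X)`, a subset of `βX`. -/
noncomputable def OnePointExt.theta (Y : OnePointExt X) : Set (StoneCech X) :=
  Y.tau ⁻¹' {stoneCechUnit Y.pt}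

/-- A zero-set: `f⁻¹(0)` for a continuous `f : Z → [0,1]`. -/
def IsZeroSet {Z : Type u} [TopologicalSpace Z] (A : Set Z) : Prop :=
  ∃ f : Z → unitInterval, Continuous f ∧ A = f ⁻¹' {0}

/-- A cozero-set: a complement of a zero-set. -/
def IsCozeroSet {Z : Type u} [TopologicalSpace Z] (A : Set Z) : Prop :=
  ∃ f : Z → unitInterval, Continuous f ∧ A = (f ⁻¹' {0})ᶜ

/-- `λ_P X = ⋃ { int_{βX} cl_{βX} C : C a cozero-set of X whose closure in X has P }`. -/
def lambdaP (P : (Z : Type u) → [TopologicalSpace Z] → Prop) (X : Type u)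
    [TopologicalSpace X] : Set (StoneCech X) :=
  ⋃ C ∈ {C : Set X | IsCozeroSet C ∧ P (closure C)},
    interior (closure (stoneCechUnit '' C))

/-- A pseudocompact space: every continuous real-valued function is bounded. -/
def Pseudocompact (Z : Type u) [TopologicalSpace Z] : Prop :=
  ∀ f : Z → ℝ, Continuous f → ∃ M, ∀ z, |f z| ≤ M

/-- `P` is a topological property: it is invariant under homeomorphisms. -/
def TopProperty (P : (Z : Type u) → [TopologicalSpace Z] → Prop) : Prop :=
  ∀ (Z W : Type u) [TopologicalSpace Z] [TopologicalSpace W], Z ≃ₜ W → P Z → P W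

/-- `P` is closed hereditary: closed subspaces of a space with `P` have `P`. -/
def ClosedHereditary (P : (Z : Type u) → [TopologicalSpace Z] → Prop) : Prop :=
  ∀ (Z : Type u) [TopologicalSpace Z], P Z → ∀ F : Set Z, IsClosed F → P F

/-- `P` is preserved under finite closed sums of subspaces. -/
def FiniteClosedSums (P : (Z : Type u) → [TopologicalSpace Z] → Prop) : Prop :=
  ∀ (Z : Type u) [TopologicalSpace Z] [T2Space Z] (n : ℕ) (F : Fin n → Set Z),
    (∀ i, IsClosed (F i)) → (∀ i, P (F i)) → (⋃ i, F i) = univ → P Z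

/-- `P` is preserved under locally finite closed sums of subspaces. -/
def LocallyFiniteClosedSums (P : (Z : Type u) → [TopologicalSpace Z] → Prop) : Prop :=
  ∀ (Z : Type u) [TopologicalSpace Z] [T2Space Z] (ι : Type u) (F : ι → Set Z),
    LocallyFinite F → (∀ i, IsClosed (F i)) → (∀ i, P (F i)) → (⋃ i, F i) = univ → P Z

/-- `P` is preserved under countable closed sums of subspaces. -/
def CountableClosedSums (P : (Z : Type u) → [TopologicalSpace Z] → Prop) : Prop :=
  ∀ (Z : Type u) [TopologicalSpace Z] [T2Space Z] (F : ℕ → Set Z),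
    (∀ i, IsClosed (F i)) → (∀ i, P (F i)) → (⋃ i, F i) = univ → P Z

/-- Mrówka's condition (W): if a Tychonoff space `T` has a point `p` with an open base `B` at
`p` such that `T \ b` has `P` for each `b ∈ B`, then `T` has `P`. -/
def MrowkaW (P : (Z : Type u) → [TopologicalSpace Z] → Prop) : Prop :=
  ∀ (T : Type u) [TopologicalSpace T] [T35Space T] (p : T) (B : Set (Set T)),
    (∀ b ∈ B, IsOpen b ∧ p ∈ b) →
    (∀ V : Set T, IsOpen V → p ∈ V → ∃ b ∈ B, b ⊆ V) →
    (∀ b ∈ B, P (↥(bᶜ))) → P T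

/-- `X` is locally-P: every point has an open neighborhood whose closure has `P`. -/
def LocallyP (P : (Z : Type u) → [TopologicalSpace Z] → Prop)
    (X : Type u) [TopologicalSpace X] : Prop :=
  ∀ x : X, ∃ U : Set X, IsOpen U ∧ x ∈ U ∧ P (closure U)

/-- `P` coincides with pseudocompactness. -/
def IsPseudocompactness (P : (Z : Type u) → [TopologicalSpace Z] → Prop) : Prop :=
  ∀ (Z : Type u) [TopologicalSpace Z], P Z ↔ Pseudocompact Z

/-- A `P`-far one-point extension: for every zero-set `Z` of `X` contained in a cozero-set `C`
of `X` whose closure has `P`, the closure of `Z` in the extension misses the remainder. -/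
def OnePointExt.PFar (P : (Z : Type u) → [TopologicalSpace Z] → Prop)
    (Y : OnePointExt X) : Prop :=
  ∀ Z C : Set X, IsZeroSet Z → IsCozeroSet C → P (closure C) → Z ⊆ C →
    Y.pt ∉ closure (Y.ι '' Z)

/-- Čech-complete: `Z` is a Gδ-set in `βZ`. -/
def CechComplete (Z : Type u) [TopologicalSpace Z] : Prop :=
  IsGδ (Set.range (stoneCechUnit : Z → StoneCech Z))

/-- The extension is first countable at the added point. -/
def OnePointExt.FirstCountableAtPt (Y : OnePointExt X) : Prop :=
  (𝓝 Y.pt).IsCountablyGenerated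

/-- Strong zero-dimensionality: `βX` has an open base of clopen sets. -/
def StronglyZeroDimensional (X : Type u) [TopologicalSpace X] : Prop :=
  ∀ U : Set (StoneCech X), IsOpen U → ∀ x ∈ U,
    ∃ V : Set (StoneCech X), IsClopen V ∧ x ∈ V ∧ V ⊆ U

/-- `Δ` is an order-isomorphism from the subset `A` of one-point extensions of `X` (with the
order `≤`) onto the subset `B` of one-point extensions of `Y`, where extensions are regarded
up to the equivalence `OnePointExt.equiv`: `Δ` maps `A` into `B`, reflects and preserves `≤`
on `A`, and every member of `B` is equivalent to the image of a member of `A`. -/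
def RestrictedOrderIso {X Y : Type u} [TopologicalSpace X] [TopologicalSpace Y]
    (A : Set (OnePointExt X)) (B : Set (OnePointExt Y))
    (Δ : OnePointExt X → OnePointExt Y) : Prop :=
  (∀ T ∈ A, Δ T ∈ B) ∧
  (∀ T1 ∈ A, ∀ T2 ∈ A, (T1.le T2 ↔ (Δ T1).le (Δ T2))) ∧
  (∀ S ∈ B, ∃ T ∈ A, (Δ T).equiv S)


/-! ### Auxiliary lemmas -/

section AuxLemmas

variable {α : Type u} [TopologicalSpace α]

lemma myIsInducing_stoneCechUnit [T35Space α] :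
    Topology.IsInducing (stoneCechUnit : α → StoneCech α) := by
  refine isInducing_iff_nhds.mpr fun x => le_antisymm
    ((continuous_stoneCechUnit.tendsto x).le_comap) ?_
  intro s hs
  rcases mem_nhds_iff.mp hs with ⟨U, hUs, hUo, hxU⟩
  obtain ⟨f, fc, fx, fK⟩ :=
    CompletelyRegularSpace.completely_regular x Uᶜ hUo.isClosed_compl (by simpa using hxU)
  set fβ := stoneCechExtend fc with hfβ
  have hext : fβ ∘ stoneCechUnit = f := stoneCechExtend_extends fc
  have hV : IsOpen (fβ ⁻¹' (Subtype.val ⁻¹' Iio (1/2 : ℝ))) :=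
    ((isOpen_Iio).preimage continuous_subtype_val).preimage (continuous_stoneCechExtend fc)
  refine mem_comap.mpr ⟨_, hV.mem_nhds ?_, ?_⟩
  · show (fβ (stoneCechUnit x) : ℝ) < 1/2
    have : fβ (stoneCechUnit x) = f x := congrFun hext x
    rw [this, fx]; norm_num
  · intro y hy
    have hy' : (f y : ℝ) < 1/2 := by
      have : fβ (stoneCechUnit y) = f y := congrFun hext y
      simpa [this] using hy
    apply hUs
    by_contra hyU
    have := fK (by simpa using hyU)
    simp only [Pi.one_apply] at this
    rw [this] at hy'
    norm_num at hy'

lemma mem_closure_of_unit_mem [T35Space α] {s : Set α} {a : α}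
    (h : stoneCechUnit a ∈ closure (stoneCechUnit '' s)) : a ∈ closure s := by
  rw [myIsInducing_stoneCechUnit.closure_eq_preimage_closure_image s]; exact h

/-- subtype-of-subtype homeomorphism -/
def subsubHomeo {s t : Set α} (hst : s ⊆ t) :
    (Subtype.val ⁻¹' s : Set t) ≃ₜ s where
  toFun x := ⟨x.1.1, x.2⟩
  invFun y := ⟨⟨y.1, hst y.2⟩, y.2⟩
  left_inv _ := rfl
  right_inv _ := rfl
  continuous_toFun :=
    (continuous_subtype_val.comp continuous_subtype_val).subtype_mk _
  continuous_invFun :=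
    (continuous_subtype_val.subtype_mk _).subtype_mk _

instance instCRsub [CompletelyRegularSpace α] (s : Set α) : CompletelyRegularSpace s := by
  constructor
  intro x K hK hxK
  rcases isClosed_induced_iff.mp hK with ⟨F, hF, rfl⟩
  obtain ⟨f, fc, fx, fK⟩ :=
    CompletelyRegularSpace.completely_regular (x : α) F hF hxK
  exact ⟨fun y => f y, fc.comp continuous_subtype_val, fx, fun y hy => fK hy⟩

instance instT35sub [T35Space α] (s : Set α) : T35Space s := ⟨⟩

lemma pseudocompact_of_homeo {A B : Type*} [TopologicalSpace A] [TopologicalSpace B]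
    (e : A ≃ₜ B) (hA : Pseudocompact A) : Pseudocompact B := by
  intro f hf
  obtain ⟨M, hM⟩ := hA (f ∘ e) (hf.comp e.continuous)
  exact ⟨M, fun z => by simpa using hM (e.symm z)⟩

lemma pseudocompact_closure_of_isOpen {B : Type u} [TopologicalSpace B] [T35Space B]
    (hB : Pseudocompact B) {U : Set B} (hU : IsOpen U) : Pseudocompact (closure U) := by
  intro f hf
  by_contra hunb
  push_neg at hunb
  -- the nested open sets
  set O : ℕ → Set B := fun n => {b | ∃ h : b ∈ U, (n : ℝ) < |f ⟨b, subset_closure h⟩|} with hO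
  have hOopen : ∀ n, IsOpen (O n) := by
    intro n
    have hF : Continuous fun u : U => f ⟨u.1, subset_closure u.2⟩ :=
      hf.comp (continuous_subtype_val.subtype_mk _)
    have : O n = Subtype.val '' {u : U | (n : ℝ) < |f ⟨u.1, subset_closure u.2⟩|} := by
      ext b
      constructor
      · rintro ⟨h, hb⟩; exact ⟨⟨b, h⟩, hb, rfl⟩
      · rintro ⟨u, hu, rfl⟩; exact ⟨u.2, hu⟩
    rw [this]
    exact hU.isOpenMap_subtype_val _
      (isOpen_lt continuous_const (continuous_abs.comp hF))
  have hOanti : ∀ {m n : ℕ}, n ≤ m → O m ⊆ O n := by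
    intro m n hnm b ⟨h, hb⟩
    exact ⟨h, lt_of_le_of_lt (by exact_mod_cast Nat.cast_le.mpr hnm) hb⟩
  have hOne : ∀ n, (O n).Nonempty := by
    intro n
    obtain ⟨z, hz⟩ := hunb n
    have hV : IsOpen {w : closure U | (n : ℝ) < |f w|} :=
      isOpen_lt continuous_const (continuous_abs.comp hf)
    rcases isOpen_induced_iff.mp hV with ⟨W, hWo, hWe⟩
    have hzW : (z : B) ∈ W := by
      have : z ∈ Subtype.val ⁻¹' W := by rw [hWe]; exact hz
      exact this
    obtain ⟨b, hbW, hbU⟩ := mem_closure_iff.mp z.2 W hWo hzW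
    refine ⟨b, hbU, ?_⟩
    have : (⟨b, subset_closure hbU⟩ : closure U) ∈ Subtype.val ⁻¹' W := hbW
    rw [hWe] at this
    exact this
  -- intersection of closures is empty
  have hinter : ∀ b : B, ∃ n, b ∉ closure (O n) := by
    intro b
    by_contra hb
    push_neg at hb
    have hbU : b ∈ closure U :=
      closure_mono (fun c hc => by obtain ⟨h, -⟩ := hc; exact h) (hb 0)
    set a : closure U := ⟨b, hbU⟩
    obtain ⟨n, hn⟩ := exists_nat_gt |f a|
    have hN : IsOpen {w : closure U | |f w| < (n : ℝ)} :=
      isOpen_lt (continuous_abs.comp hf) continuous_const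
    rcases isOpen_induced_iff.mp hN with ⟨G, hGo, hGe⟩
    have haG : b ∈ G := by
      have : a ∈ Subtype.val ⁻¹' G := hGe ▸ hn
      exact this
    obtain ⟨c, hcG, hc⟩ := mem_closure_iff.mp (hb n) G hGo haG
    obtain ⟨hcU, hcf⟩ := hc
    have : (⟨c, subset_closure hcU⟩ : closure U) ∈ Subtype.val ⁻¹' G := hcG
    rw [hGe] at this
    exact absurd hcf (not_lt.mpr this.le)
  -- choose points and Urysohn functions
  choose x hx using hOne
  have hg : ∀ n, ∃ g : B → ℝ, Continuous g ∧ g (x n) = (n : ℝ) ∧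
      (∀ b, b ∉ O n → g b = 0) ∧ ∀ b, 0 ≤ g b := by
    intro n
    obtain ⟨g, gc, gx, gK⟩ := CompletelyRegularSpace.completely_regular (x n) (O n)ᶜ
      (hOopen n).isClosed_compl (by simpa using hx n)
    refine ⟨fun b => (n : ℝ) * (1 - g b), by fun_prop, by simp [gx], ?_, ?_⟩
    · intro b hb
      have h1 := gK (by simpa using hb)
      simp only [Pi.one_apply] at h1
      simp [h1]
    · intro b
      have h1 : (g b : ℝ) ≤ 1 := (g b).2.2
      have : (0:ℝ) ≤ 1 - (g b : ℝ) := by linarith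
      exact mul_nonneg (Nat.cast_nonneg n) this
  choose g gc gx gz gnn using hg
  -- the sum
  set F : B → ℝ := fun b => ∑' n, g n b with hF
  have hsupp : ∀ b : B, ∀ N, b ∉ closure (O N) → ∀ m, N ≤ m → g m b = 0 := by
    intro b N hbN m hm
    exact gz m b fun hbm => hbN (subset_closure (hOanti hm hbm))
  have hsummable : ∀ b : B, Summable fun n => g n b := by
    intro b
    obtain ⟨N, hN⟩ := hinter b
    exact summable_of_ne_finset_zero (s := Finset.range N)
      (fun m hm => hsupp b N hN m (by simpa using hm))
  have hFc : Continuous F := by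
    rw [continuous_iff_continuousAt]
    intro b
    obtain ⟨N, hN⟩ := hinter b
    have hopen : IsOpen (closure (O N))ᶜ := isClosed_closure.isOpen_compl
    have heq : ∀ v ∈ (closure (O N))ᶜ, F v = ∑ m ∈ Finset.range N, g m v := by
      intro v hv
      exact tsum_eq_sum fun m hm => hsupp v N hv m (by simpa using hm)
    have hfin : ContinuousAt (fun v => ∑ m ∈ Finset.range N, g m v) b := by
      exact (continuous_finset_sum _ fun m _ => gc m).continuousAt
    exact hfin.congr (eventuallyEq_of_mem (hopen.mem_nhds hN) heq).symm
  obtain ⟨M, hM⟩ := hB F hFc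
  obtain ⟨n, hn⟩ := exists_nat_gt M
  have hle : (n : ℝ) ≤ F (x n) := by
    have := Summable.le_tsum (hsummable (x n)) n (fun j _ => gnn j (x n))
    rwa [gx n] at this
  have : F (x n) ≤ M := (le_abs_self _).trans (hM (x n))
  linarith

/-- If `Z ⊆ C`with `Z` a zero-set and `C` a cozero-set, then in `βX` the closure of `Z`
is contained in the interior of the closure of `C`. -/
lemma zc_interior {X : Type u} [TopologicalSpace X] {Z C : Set X}
    (hZ : IsZeroSet Z) (hC : IsCozeroSet C) (hZC : Z ⊆ C) :
    closure (stoneCechUnit '' Z : Set (StoneCech X)) ⊆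
      interior (closure (stoneCechUnit '' C)) := by
  obtain ⟨f, fc, hfZ⟩ := hZ
  obtain ⟨q, qc, hqC⟩ := hC
  have dpos : ∀ x, (0 : ℝ) < (f x : ℝ) + (q x : ℝ) := by
    intro x
    rcases eq_or_ne (f x) 0 with h | h
    · have hxZ : x ∈ Z := by rw [hfZ]; exact h
      have hxC : x ∈ C := hZC hxZ
      have hq : q x ≠ 0 := by
        rw [hqC] at hxC; simpa using hxC
      have hq' : (0:ℝ) < (q x : ℝ) :=
        lt_of_le_of_ne (q x).2.1 (fun hc => hq (by ext; exact hc.symm))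
      have : (f x : ℝ) = 0 := by rw [h]; rfl
      linarith
    · have hf' : (0:ℝ) < (f x : ℝ) :=
        lt_of_le_of_ne (f x).2.1 (fun hc => h (by ext; exact hc.symm))
      have := (q x).2.1
      linarith
  set k0 : X → ℝ := fun x => (f x : ℝ) / ((f x : ℝ) + (q x : ℝ)) with hk0
  have hk0mem : ∀ x, k0 x ∈ Set.Icc (0:ℝ) 1 := by
    intro x
    constructor
    · exact div_nonneg (f x).2.1 (dpos x).le
    · rw [div_le_one (dpos x)]
      have := (q x).2.1; linarith
  set k : X → unitInterval := fun x => ⟨k0 x, hk0mem x⟩ with hk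
  have kc : Continuous k := by
    refine Continuous.subtype_mk ?_ _
    exact (continuous_subtype_val.comp fc).div
      ((continuous_subtype_val.comp fc).add (continuous_subtype_val.comp qc))
      (fun x => (dpos x).ne')
  have hkZ : ∀ x ∈ Z, (k x : ℝ) = 0 := by
    intro x hx
    have : f x = 0 := by rw [hfZ] at hx; exact hx
    show k0 x = 0
    rw [hk0]; simp only [this]; norm_num
  have hkC : ∀ x, x ∉ C → (k x : ℝ) = 1 := by
    intro x hx
    have hq0 : q x = 0 := by
      rw [hqC] at hx; simpa using hx
    have hxZ : x ∉ Z := fun h => hx (hZC h)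
    have hf : f x ≠ 0 := by rw [hfZ] at hxZ; simpa using hxZ
    have hf' : (f x : ℝ) ≠ 0 := fun hc => hf (by ext; exact hc)
    show k0 x = 1
    rw [hk0]; simp only [hq0]
    show (f x : ℝ) / ((f x : ℝ) + ((0 : unitInterval) : ℝ)) = 1
    rw [show ((0 : unitInterval) : ℝ) = 0 from rfl, add_zero, div_self hf']
  set kβ := stoneCechExtend kc with hkβ
  have hext : ∀ x, kβ (stoneCechUnit x) = k x := fun x => congrFun (stoneCechExtend_extends kc) x
  set W : Set (StoneCech X) := kβ ⁻¹' (Subtype.val ⁻¹' Iio (1/2 : ℝ)) with hW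
  have hWopen : IsOpen W :=
    (isOpen_Iio.preimage continuous_subtype_val).preimage (continuous_stoneCechExtend kc)
  have h1 : closure (stoneCechUnit '' Z) ⊆ W := by
    have hS : IsClosed (kβ ⁻¹' (Subtype.val ⁻¹' ({0} : Set ℝ))) :=
      (isClosed_singleton.preimage continuous_subtype_val).preimage
        (continuous_stoneCechExtend kc)
    have hsub : stoneCechUnit '' Z ⊆ kβ ⁻¹' (Subtype.val ⁻¹' ({0} : Set ℝ)) := by
      rintro _ ⟨z, hz, rfl⟩
      show (kβ (stoneCechUnit z) : ℝ) ∈ ({0} : Set ℝ)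
      rw [hext z]; simpa using hkZ z hz
    refine (closure_minimal hsub hS).trans ?_
    intro y hy
    show (kβ y : ℝ) < 1/2
    have : (kβ y : ℝ) = 0 := hy
    rw [this]; norm_num
  have h2 : W ⊆ closure (stoneCechUnit '' C) := by
    have hdense : Dense (range (stoneCechUnit : X → StoneCech X)) := denseRange_stoneCechUnit
    refine (hdense.open_subset_closure_inter hWopen).trans (closure_mono ?_)
    rintro y ⟨hyW, x, rfl⟩
    refine ⟨x, ?_, rfl⟩
    by_contra hxC
    have : (kβ (stoneCechUnit x) : ℝ) < 1/2 := hyW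
    rw [hext x, hkC x hxC] at this
    norm_num at this
  exact fun y hy => (interior_maximal h2 hWopen) (h1 hy)

end AuxLemmas

/-- `τ '' closure (η '' S) = closure (ηY '' (ι '' S))`. -/
lemma key_tau (Y : OnePointExt X) (S : Set X) :
    Y.tau '' closure (stoneCechUnit '' S) =
      closure (stoneCechUnit '' (Y.ι '' S)) := by
  have hτc : Continuous Y.tau := continuous_stoneCechExtend _
  have hτη : ∀ x, Y.tau (stoneCechUnit x) = stoneCechUnit (Y.ι x) :=
    fun x => congrFun (stoneCechExtend_extends _) x
  have himg : Y.tau '' (stoneCechUnit '' S) = stoneCechUnit '' (Y.ι '' S) := by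
    rw [Set.image_image, Set.image_image]
    exact Set.image_congr fun x _ => hτη x
  apply subset_antisymm
  · refine (image_closure_subset_closure_image hτc).trans ?_
    rw [himg]
  · have hK : IsCompact (closure (stoneCechUnit '' S) : Set (StoneCech X)) :=
      isClosed_closure.isCompact
    have hcl : IsClosed (Y.tau '' closure (stoneCechUnit '' S)) :=
      (hK.image hτc).isClosed
    refine closure_minimal ?_ hcl
    rw [← himg]
    exact Set.image_mono subset_closure


/-- Let `X` be a Tychonoff space and let `P` be either pseudocompactness,
or a closed hereditary topological property preserved under finite closed sums of subspaces.
For a one-point Tychonoff extension `Y` of `X`: `Y` is a `P`-far extension of `X` iff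
`Θ_X(Y) ⊆ βX \ λ_P X`. -/
theorem stmt10 {X : Type u} [TopologicalSpace X] [T35Space X]
    (P : (Z : Type u) → [TopologicalSpace Z] → Prop) (hProp : TopProperty P)
    (hP : IsPseudocompactness P ∨ (ClosedHereditary P ∧ FiniteClosedSums P))
    (Y : OnePointExt X) :
    Y.PFar P ↔ Y.theta ⊆ (lambdaP P X)ᶜ := by
  constructor
  · -- P-far implies theta avoids lambdaP
    intro hfar p hptheta
    intro hpl
    simp only [lambdaP, Set.mem_iUnion, Set.mem_setOf_eq, exists_prop] at hpl
    obtain ⟨C, ⟨hC, hPC⟩, hpC⟩ := hpl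
    set W : Set (StoneCech X) := interior (closure (stoneCechUnit '' C)) with hWdef
    obtain ⟨f, f0, f1, ficc⟩ := exists_continuous_zero_one_of_isClosed
      (isClosed_singleton (x := p)) (isOpen_interior.isClosed_compl)
      (Set.disjoint_singleton_left.mpr (by simpa using hpC))
    set r : X → ℝ := fun x => f (stoneCechUnit x) with hr
    have hrc : Continuous r := f.continuous.comp continuous_stoneCechUnit
    have hr0 : ∀ x, 0 ≤ r x := fun x => (ficc _).1
    have hr1 : ∀ x, r x ≤ 1 := fun x => (ficc _).2
    set Z : Set X := {x | r x ≤ 1/3} with hZdef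
    set C' : Set X := {x | r x < 1/2} with hC'def
    have hZzero : IsZeroSet Z := by
      refine ⟨fun x => ⟨max 0 (r x - 1/3), le_max_left _ _,
        max_le (by norm_num) (by linarith [hr1 x])⟩, ?_, ?_⟩
      · exact Continuous.subtype_mk (continuous_const.max (hrc.sub continuous_const)) _
      · ext x
        simp only [hZdef, Set.mem_setOf_eq, Set.mem_preimage, Set.mem_singleton_iff,
          Subtype.ext_iff]
        show r x ≤ 1/3 ↔ max 0 (r x - 1/3) = ((0 : unitInterval) : ℝ)
        rw [show ((0 : unitInterval) : ℝ) = 0 from rfl, max_eq_left_iff]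
        constructor <;> intro h <;> linarith
    have hC'coz : IsCozeroSet C' := by
      refine ⟨fun x => ⟨max 0 (1/2 - r x), le_max_left _ _,
        max_le (by norm_num) (by linarith [hr0 x])⟩, ?_, ?_⟩
      · exact Continuous.subtype_mk (continuous_const.max (continuous_const.sub hrc)) _
      · ext x
        simp only [hC'def, Set.mem_setOf_eq, Set.mem_compl_iff, Set.mem_preimage,
          Set.mem_singleton_iff, Subtype.ext_iff]
        show r x < 1/2 ↔ ¬ (max 0 (1/2 - r x) = ((0 : unitInterval) : ℝ))
        rw [show ((0 : unitInterval) : ℝ) = 0 from rfl, max_eq_left_iff]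
        constructor
        · intro h hc; linarith
        · intro h; by_contra hc; push_neg at hc; exact h (by linarith)
    have hZC' : Z ⊆ C' := fun x hx => by
      simp only [hZdef, Set.mem_setOf_eq] at hx
      simp only [hC'def, Set.mem_setOf_eq]; linarith
    have hC'cl : closure C' ⊆ closure C := by
      refine closure_minimal ?_ isClosed_closure
      intro x hx
      have hxW : stoneCechUnit x ∈ W := by
        by_contra hc
        have h1 : f (stoneCechUnit x) = 1 := f1 (by simpa using hc)
        have hx' : r x < 1/2 := hx
        rw [hr] at hx'
        simp only [h1] at hx'
        norm_num at hx'
      exact mem_closure_of_unit_mem (interior_subset hxW)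
    have hC'subt : C' ⊆ closure C := subset_closure.trans hC'cl
    have hPC' : P (closure C') := by
      rcases hP with hps | ⟨hch, -⟩
      · have hPc : Pseudocompact (closure C) := (hps _).mp hPC
        have hC'op : IsOpen C' := isOpen_lt hrc continuous_const
        have hUo : IsOpen (Subtype.val ⁻¹' C' : Set (closure C)) :=
          hC'op.preimage continuous_subtype_val
        have h1 := pseudocompact_closure_of_isOpen hPc hUo
        have hcl : closure (Subtype.val ⁻¹' C' : Set (closure C)) =
            Subtype.val ⁻¹' (closure C') := by
          rw [Topology.IsInducing.subtypeVal.closure_eq_preimage_closure_image]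
          rw [Set.image_preimage_eq_inter_range, Subtype.range_val,
            Set.inter_eq_self_of_subset_left hC'subt]
        rw [hcl] at h1
        exact (hps _).mpr (pseudocompact_of_homeo (subsubHomeo hC'cl) h1)
      · have hFcl : IsClosed (Subtype.val ⁻¹' (closure C') : Set (closure C)) :=
          isClosed_closure.preimage continuous_subtype_val
        have := hch _ hPC _ hFcl
        exact hProp _ _ (subsubHomeo hC'cl) this
    have hpZ : p ∈ closure (stoneCechUnit '' Z) := by
      have hV : IsOpen (⇑f ⁻¹' Iio (1/3 : ℝ)) := isOpen_Iio.preimage f.continuous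
      have hpV : p ∈ ⇑f ⁻¹' Iio (1/3 : ℝ) := by
        have h0 : f p = 0 := f0 rfl
        simp only [Set.mem_preimage, h0]
        norm_num
      have hdense : Dense (range (stoneCechUnit : X → StoneCech X)) := denseRange_stoneCechUnit
      have hsub2 := hdense.open_subset_closure_inter hV
      refine closure_mono ?_ (hsub2 hpV)
      rintro y ⟨hy, x, rfl⟩
      exact ⟨x, le_of_lt (show r x < 1/3 from hy), rfl⟩
    have hτp : Y.tau p = stoneCechUnit Y.pt := hptheta
    have h2 : stoneCechUnit Y.pt ∈ closure (stoneCechUnit '' (Y.ι '' Z)) := by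
      rw [← key_tau Y Z, ← hτp]
      exact ⟨p, hpZ, rfl⟩
    exact hfar Z C' hZzero hC'coz hPC' hZC' (mem_closure_of_unit_mem h2)
  · -- theta avoids lambdaP implies P-far
    intro hsub Z C hZ hC hPC hZC
    intro hptmem
    have h1 : stoneCechUnit Y.pt ∈ closure (stoneCechUnit '' (Y.ι '' Z)) :=
      image_closure_subset_closure_image continuous_stoneCechUnit ⟨Y.pt, hptmem, rfl⟩
    rw [← key_tau Y Z] at h1
    obtain ⟨p, hpK, hpτ⟩ := h1
    have hptheta : p ∈ Y.theta := by
      simp only [OnePointExt.theta, Set.mem_preimage, Set.mem_singleton_iff]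
      exact hpτ
    refine hsub hptheta ?_
    simp only [lambdaP, Set.mem_iUnion, Set.mem_setOf_eq, exists_prop]
    exact ⟨C, ⟨hC, hPC⟩, zc_interior hZ hC hZC hpK⟩
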